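/- For any distribution μ ∈ Δ(X×A) and any cost c with ‖c‖_∞ ≤ 1, the gap between the linear objective at μ and the true expected cost of the induced policy satisfies ⟨μ, c⟩ - ρ_c(π_μ) ≤ ‖T_γ μ - ν₀‖₁. -/

import Mathlib

open Finset

variable {X A : Type*} [Fintype X] [Fintype A] [DecidableEq X] [DecidableEq A]
  [Nonempty X] [Nonempty A]

/-- A finite discounted Markov decision process. -/
structure FinMDP (X A : Type*) [Fintype X] [Fintype A] where
  P : X → A → X → ℝ
  P_nonneg : ∀ x a x', 0 ≤ P x a x'
  P_sum : ∀ x a, ∑ x', P x a x' = 1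
  ν : X → ℝ
  ν_nonneg : ∀ x, 0 ≤ ν x
  ν_sum : ∑ x, ν x = 1
  γ : ℝ
  γ_pos : 0 < γ
  γ_lt_one : γ < 1

/-- A stationary Markov policy. -/
def FinMDP.IsPolicy (π : X → A → ℝ) : Prop :=
  (∀ x a, 0 ≤ π x a) ∧ ∀ x, ∑ a, π x a = 1

namespace FinMDP

variable (M : FinMDP X A)

/-- The state-action distribution at time `t` of policy `π` started from `ν'`. -/
noncomputable def saDist (ν' : X → ℝ) (π : X → A → ℝ) : ℕ → X × A → ℝ
  | 0 => fun p => ν' p.1 * π p.1 p.2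
  | t + 1 => fun p => (∑ q : X × A, saDist ν' π t q * M.P q.1 q.2 p.1) * π p.1 p.2

/-- The normalized discounted occupancy measure of `π` started from `ν'`. -/
noncomputable def occFrom (ν' : X → ℝ) (π : X → A → ℝ) (p : X × A) : ℝ :=
  (1 - M.γ) * ∑' t : ℕ, M.γ ^ t * M.saDist ν' π t p

/-- The normalized discounted occupancy measure of `π` (from the initial distribution). -/
noncomputable def occ (π : X → A → ℝ) : X × A → ℝ :=
  M.occFrom M.ν π

/-- The (normalized) value function of policy `π` for cost `c`. -/
noncomputable def value (c : X × A → ℝ) (π : X → A → ℝ) (x : X) : ℝ :=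
  ∑ p : X × A, M.occFrom (fun y => if y = x then 1 else 0) π p * c p

/-- The total expected (normalized) discounted cost `ρ_c(π) = ⟨μ_π, c⟩`. -/
noncomputable def cost (c : X × A → ℝ) (π : X → A → ℝ) : ℝ :=
  ∑ p : X × A, M.occ π p * c p

/-- The Bellman flow operator `T_γ μ = (1/(1-γ)) (B - γ P)ᵀ μ`. -/
noncomputable def Tflow (μ : X × A → ℝ) (x' : X) : ℝ :=
  (1 / (1 - M.γ)) * ((∑ a, μ (x', a)) - M.γ * ∑ p : X × A, μ p * M.P p.1 p.2 x')

/-- The adjoint operator `T*_γ u = (1/(1-γ)) (B - γ P) u`. -/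
noncomputable def Tadj (u : X → ℝ) (p : X × A) : ℝ :=
  (1 / (1 - M.γ)) * (u p.1 - M.γ * ∑ x', M.P p.1 p.2 x' * u x')

/-- `π` is an optimal policy for the forward RL problem with cost `c`. -/
def IsOptimal (c : X × A → ℝ) (π : X → A → ℝ) : Prop :=
  IsPolicy π ∧ ∀ π', IsPolicy π' → M.cost c π ≤ M.cost c π'

/-- The optimal value function `V*_c(x) = min_π V_c^π(x)`. -/
noncomputable def Vstar (c : X × A → ℝ) (x : X) : ℝ :=
  sInf {v | ∃ π, IsPolicy π ∧ v = M.value c π x}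

end FinMDP

/-- The policy induced by a state-action distribution:
`π_μ(a|x) = μ(x,a) / ∑_{a'} μ(x,a')` (uniform on zero-mass states). -/
noncomputable def inducedPolicy (μ : X × A → ℝ) (x : X) (a : A) : ℝ :=
  if (∑ a' : A, μ (x, a')) = 0 then (1 : ℝ) / (Fintype.card A)
  else μ (x, a) / ∑ a' : A, μ (x, a')

/-- `μ` is a probability distribution on state-action pairs. -/
def IsDist (μ : X × A → ℝ) : Prop := (∀ p, 0 ≤ μ p) ∧ ∑ p : X × A, μ p = 1

/-- Membership in the probability simplex `Δ_{[n]}`. -/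
def simplexPt {n : ℕ} (w : Fin n → ℝ) : Prop := (∀ i, 0 ≤ w i) ∧ ∑ i, w i = 1

/-- The `ℓ¹` norm of a finitely supported vector. -/
noncomputable def l1 {ι : Type*} [Fintype ι] (f : ι → ℝ) : ℝ := ∑ i, |f i|

/-- The `ℓ∞` norm of a finitely supported vector. -/
noncomputable def linf {ι : Type*} [Fintype ι] [Nonempty ι] (f : ι → ℝ) : ℝ :=
  Finset.univ.sup' Finset.univ_nonempty fun i => |f i|

/-- The cost `c_w = ∑ᵢ wᵢ cᵢ` parameterized by weights `w`. -/
noncomputable def costW {nc : ℕ} (c : Fin nc → X × A → ℝ) (w : Fin nc → ℝ) :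
    X × A → ℝ :=
  fun p => ∑ i, w i * c i p

/-- The objective of the dual LP `(D_{π_E})`. -/
noncomputable def dualObj {nc : ℕ} (M : FinMDP X A) (c : Fin nc → X × A → ℝ)
    (πE : X → A → ℝ) (u : X → ℝ) (w : Fin nc → ℝ) : ℝ :=
  ∑ p : X × A, M.occ πE p * (M.Tadj u p - costW c w p)

/-- Feasibility for the dual LP `(D_{π_E})`. -/
def dualFeasible {nc : ℕ} (M : FinMDP X A) (c : Fin nc → X × A → ℝ)
    (u : X → ℝ) (w : Fin nc → ℝ) : Prop :=
  simplexPt w ∧ ∀ p, 0 ≤ costW c w p - M.Tadj u p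

/-- Optimality for the dual LP `(D_{π_E})`. -/
def dualOptimal {nc : ℕ} (M : FinMDP X A) (c : Fin nc → X × A → ℝ)
    (πE : X → A → ℝ) (u : X → ℝ) (w : Fin nc → ℝ) : Prop :=
  dualFeasible M c u w ∧
    ∀ u' w', dualFeasible M c u' w' → dualObj M c πE u' w' ≤ dualObj M c πE u w

/-- The `C`-distance `δ_C(π, π_E) = max_i (ρ_{c_i}(π) - ρ_{c_i}(π_E))`. -/
noncomputable def gapMax {nc : ℕ} [NeZero nc] (M : FinMDP X A)
    (c : Fin nc → X × A → ℝ) (πE π : X → A → ℝ) : ℝ :=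
  haveI : Nonempty (Fin nc) := ⟨⟨0, Nat.pos_of_ne_zero (NeZero.ne nc)⟩⟩
  Finset.univ.sup' Finset.univ_nonempty fun i => M.cost (c i) π - M.cost (c i) πE

/-- `π_A` is an apprentice policy: it minimizes `δ_C(·, π_E)` over stationary policies. -/
def IsApprentice {nc : ℕ} [NeZero nc] (M : FinMDP X A)
    (c : Fin nc → X × A → ℝ) (πE πA : X → A → ℝ) : Prop :=
  FinMDP.IsPolicy πA ∧
    ∀ π, FinMDP.IsPolicy π → gapMax M c πE πA ≤ gapMax M c πE π

/-- The parameter set `Λ = {λ : ‖λ‖₂ ≤ β/√n_u}`. -/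
def lamSet (nu : ℕ) (β : ℝ) : Set (Fin nu → ℝ) :=
  {l | Real.sqrt (∑ k, l k ^ 2) ≤ β / Real.sqrt nu}

/-- The reduced Lagrangian `L_r(θ, λ, w) = ⟨μ_θ - μ_{π_E}, c_w - T*_γ u_λ⟩`. -/
noncomputable def Lr {nm nu nc : ℕ} (M : FinMDP X A)
    (Φ : Fin nm → X × A → ℝ) (Ψ : Fin nu → X → ℝ) (c : Fin nc → X × A → ℝ)
    (πE : X → A → ℝ) (θ : Fin nm → ℝ) (lam : Fin nu → ℝ) (w : Fin nc → ℝ) : ℝ :=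
  ∑ p : X × A, ((∑ i, θ i * Φ i p) - M.occ πE p) *
    ((∑ j, w j * c j p) - M.Tadj (fun x => ∑ k, lam k * Ψ k x) p)

/-- The saddle-point residual of a point `(θ, λ, w)` for the reduced Lagrangian. -/
noncomputable def epsSad {nm nu nc : ℕ} (M : FinMDP X A)
    (Φ : Fin nm → X × A → ℝ) (Ψ : Fin nu → X → ℝ) (c : Fin nc → X × A → ℝ)
    (πE : X → A → ℝ) (β : ℝ)
    (θ : Fin nm → ℝ) (lam : Fin nu → ℝ) (w : Fin nc → ℝ) : ℝ :=
  sSup {v | ∃ lam' ∈ lamSet nu β, ∃ w', simplexPt w' ∧ v = Lr M Φ Ψ c πE θ lam' w'} -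
    sInf {v | ∃ θ', simplexPt θ' ∧ v = Lr M Φ Ψ c πE θ' lam w}



section AuxProof

variable (M : FinMDP X A)

lemma aux_gamma_nonneg : 0 ≤ M.γ := le_of_lt M.γ_pos

lemma aux_one_sub_gamma_pos : 0 < 1 - M.γ := by linarith [M.γ_lt_one]

lemma aux_inducedPolicy_isPolicy (μ : X × A → ℝ) (hμ : ∀ p, 0 ≤ μ p) :
    FinMDP.IsPolicy (inducedPolicy μ) := by
  constructor
  · intro x a
    unfold inducedPolicy
    split
    · positivity
    · exact div_nonneg (hμ _) (Finset.sum_nonneg fun a' _ => hμ _)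
  · intro x
    unfold inducedPolicy
    by_cases h : (∑ a' : A, μ (x, a')) = 0
    · simp only [h, if_true, Finset.sum_const, nsmul_eq_mul, Finset.card_univ]
      have hcard : (Fintype.card A : ℝ) ≠ 0 := Nat.cast_ne_zero.mpr Fintype.card_pos.ne'
      field_simp
    · simp only [h, if_false, ← Finset.sum_div]
      exact div_self h

lemma aux_saDist_sub (ν₁ ν₂ : X → ℝ) (π : X → A → ℝ) (t : ℕ) (p : X × A) :
    M.saDist (fun x => ν₁ x - ν₂ x) π t p
      = M.saDist ν₁ π t p - M.saDist ν₂ π t p := by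
  induction t generalizing p with
  | zero => simp [FinMDP.saDist, sub_mul]
  | succ t ih =>
    simp only [FinMDP.saDist, ih, sub_mul, Finset.sum_sub_distrib]

lemma aux_saDist_l1_le (π : X → A → ℝ) (hπ : FinMDP.IsPolicy π) (ν' : X → ℝ) (t : ℕ) :
    ∑ p : X × A, |M.saDist ν' π t p| ≤ ∑ x, |ν' x| := by
  induction t with
  | zero =>
    rw [Fintype.sum_prod_type]
    have key : ∀ x : X, ∑ a : A, |M.saDist ν' π 0 (x, a)| = |ν' x| := by
      intro x
      have h1 : ∀ a : A, |M.saDist ν' π 0 (x, a)| = |ν' x| * π x a := by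
        intro a
        simp only [FinMDP.saDist]
        rw [abs_mul, abs_of_nonneg (hπ.1 x a)]
      rw [Finset.sum_congr rfl (fun a _ => h1 a), ← Finset.mul_sum, hπ.2 x, mul_one]
    rw [Finset.sum_congr rfl (fun x _ => key x)]
  | succ t ih =>
    have step : ∑ p : X × A, |M.saDist ν' π (t+1) p|
        ≤ ∑ q : X × A, |M.saDist ν' π t q| := by
      rw [Fintype.sum_prod_type]
      have hx : ∀ x : X, ∑ a : A, |M.saDist ν' π (t+1) (x, a)|
          ≤ ∑ q : X × A, |M.saDist ν' π t q| * M.P q.1 q.2 x := by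
        intro x
        have ha : ∀ a : A, |M.saDist ν' π (t+1) (x, a)|
            ≤ (∑ q : X × A, |M.saDist ν' π t q| * M.P q.1 q.2 x) * π x a := by
          intro a
          simp only [FinMDP.saDist]
          rw [abs_mul, abs_of_nonneg (hπ.1 x a)]
          refine mul_le_mul_of_nonneg_right ?_ (hπ.1 x a)
          calc |∑ q : X × A, M.saDist ν' π t q * M.P q.1 q.2 x|
              ≤ ∑ q : X × A, |M.saDist ν' π t q * M.P q.1 q.2 x| :=
                Finset.abs_sum_le_sum_abs _ _
            _ = ∑ q : X × A, |M.saDist ν' π t q| * M.P q.1 q.2 x := by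
                refine Finset.sum_congr rfl fun q _ => ?_
                rw [abs_mul, abs_of_nonneg (M.P_nonneg _ _ _)]
        calc ∑ a : A, |M.saDist ν' π (t+1) (x, a)|
            ≤ ∑ a : A, (∑ q : X × A, |M.saDist ν' π t q| * M.P q.1 q.2 x) * π x a :=
              Finset.sum_le_sum fun a _ => ha a
          _ = ∑ q : X × A, |M.saDist ν' π t q| * M.P q.1 q.2 x := by
              rw [← Finset.mul_sum, hπ.2 x, mul_one]
      calc ∑ x : X, ∑ a : A, |M.saDist ν' π (t+1) (x, a)|
          ≤ ∑ x : X, ∑ q : X × A, |M.saDist ν' π t q| * M.P q.1 q.2 x :=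
            Finset.sum_le_sum fun x _ => hx x
        _ = ∑ q : X × A, |M.saDist ν' π t q| * ∑ x : X, M.P q.1 q.2 x := by
            rw [Finset.sum_comm]
            exact Finset.sum_congr rfl fun q _ => (Finset.mul_sum _ _ _).symm
        _ = ∑ q : X × A, |M.saDist ν' π t q| := by
            refine Finset.sum_congr rfl fun q _ => ?_
            rw [M.P_sum, mul_one]
    exact le_trans step ih

lemma aux_saDist_abs_le (π : X → A → ℝ) (hπ : FinMDP.IsPolicy π) (ν' : X → ℝ)
    (t : ℕ) (p : X × A) : |M.saDist ν' π t p| ≤ ∑ x, |ν' x| :=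
  le_trans (Finset.single_le_sum (f := fun q => |M.saDist ν' π t q|)
    (fun q _ => abs_nonneg _) (Finset.mem_univ p)) (aux_saDist_l1_le M π hπ ν' t)

lemma aux_summable (π : X → A → ℝ) (hπ : FinMDP.IsPolicy π) (ν' : X → ℝ) (p : X × A) :
    Summable (fun t : ℕ => M.γ ^ t * M.saDist ν' π t p) := by
  apply Summable.of_norm_bounded (g := fun t => M.γ ^ t * ∑ x, |ν' x|)
  · exact (summable_geometric_of_lt_one (aux_gamma_nonneg M) M.γ_lt_one).mul_right _
  · intro t
    rw [Real.norm_eq_abs, abs_mul, abs_of_nonneg (pow_nonneg (aux_gamma_nonneg M) t)]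
    exact mul_le_mul_of_nonneg_left (aux_saDist_abs_le M π hπ ν' t p)
      (pow_nonneg (aux_gamma_nonneg M) t)

lemma aux_summable_abs (π : X → A → ℝ) (hπ : FinMDP.IsPolicy π) (ν' : X → ℝ) (p : X × A) :
    Summable (fun t : ℕ => M.γ ^ t * |M.saDist ν' π t p|) := by
  apply Summable.of_norm_bounded (g := fun t => M.γ ^ t * ∑ x, |ν' x|)
  · exact (summable_geometric_of_lt_one (aux_gamma_nonneg M) M.γ_lt_one).mul_right _
  · intro t
    rw [Real.norm_eq_abs, abs_mul, abs_of_nonneg (pow_nonneg (aux_gamma_nonneg M) t),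
      abs_abs]
    exact mul_le_mul_of_nonneg_left (aux_saDist_abs_le M π hπ ν' t p)
      (pow_nonneg (aux_gamma_nonneg M) t)

lemma aux_occFrom_sub (π : X → A → ℝ) (hπ : FinMDP.IsPolicy π) (ν₁ ν₂ : X → ℝ)
    (p : X × A) :
    M.occFrom (fun x => ν₁ x - ν₂ x) π p = M.occFrom ν₁ π p - M.occFrom ν₂ π p := by
  unfold FinMDP.occFrom
  rw [← mul_sub, ← Summable.tsum_sub (aux_summable M π hπ ν₁ p) (aux_summable M π hπ ν₂ p)]
  congr 1
  refine tsum_congr fun t => ?_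
  rw [aux_saDist_sub, mul_sub]

lemma aux_occFrom_l1_le (π : X → A → ℝ) (hπ : FinMDP.IsPolicy π) (ν' : X → ℝ) :
    ∑ p : X × A, |M.occFrom ν' π p| ≤ ∑ x, |ν' x| := by
  have hγ1 := aux_one_sub_gamma_pos M
  have hgeo : Summable (fun t : ℕ => M.γ ^ t * ∑ x, |ν' x|) :=
    (summable_geometric_of_lt_one (aux_gamma_nonneg M) M.γ_lt_one).mul_right _
  have h1 : ∀ p : X × A, |M.occFrom ν' π p|
      ≤ (1 - M.γ) * ∑' t : ℕ, M.γ ^ t * |M.saDist ν' π t p| := by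
    intro p
    unfold FinMDP.occFrom
    rw [abs_mul, abs_of_nonneg (le_of_lt hγ1)]
    gcongr
    calc |∑' t : ℕ, M.γ ^ t * M.saDist ν' π t p|
        ≤ ∑' t : ℕ, |M.γ ^ t * M.saDist ν' π t p| := by
          have hs : Summable fun t : ℕ => ‖M.γ ^ t * M.saDist ν' π t p‖ :=
            (aux_summable M π hπ ν' p).abs
          simpa only [Real.norm_eq_abs] using
            norm_tsum_le_tsum_norm (f := fun t : ℕ => M.γ ^ t * M.saDist ν' π t p) hs
      _ = ∑' t : ℕ, M.γ ^ t * |M.saDist ν' π t p| := by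
          refine tsum_congr fun t => ?_
          rw [abs_mul, abs_of_nonneg (pow_nonneg (aux_gamma_nonneg M) t)]
  have hsum3 : Summable (fun t : ℕ => ∑ p : X × A, M.γ ^ t * |M.saDist ν' π t p|) :=
    Summable.of_nonneg_of_le
      (fun t => Finset.sum_nonneg fun p _ =>
        mul_nonneg (pow_nonneg (aux_gamma_nonneg M) t) (abs_nonneg _))
      (fun t => by
        rw [← Finset.mul_sum]
        exact mul_le_mul_of_nonneg_left (aux_saDist_l1_le M π hπ ν' t)
          (pow_nonneg (aux_gamma_nonneg M) t))
      hgeo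
  calc ∑ p : X × A, |M.occFrom ν' π p|
      ≤ ∑ p : X × A, (1 - M.γ) * ∑' t : ℕ, M.γ ^ t * |M.saDist ν' π t p| :=
        Finset.sum_le_sum fun p _ => h1 p
    _ = (1 - M.γ) * ∑ p : X × A, ∑' t : ℕ, M.γ ^ t * |M.saDist ν' π t p| := by
        rw [Finset.mul_sum]
    _ = (1 - M.γ) * ∑' t : ℕ, ∑ p : X × A, M.γ ^ t * |M.saDist ν' π t p| := by
        rw [Summable.tsum_finsetSum (fun p _ => aux_summable_abs M π hπ ν' p)]
    _ ≤ (1 - M.γ) * ∑' t : ℕ, M.γ ^ t * ∑ x, |ν' x| := by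
        refine mul_le_mul_of_nonneg_left ?_ (le_of_lt hγ1)
        refine Summable.tsum_le_tsum (fun t => ?_) hsum3 hgeo
        rw [← Finset.mul_sum]
        exact mul_le_mul_of_nonneg_left (aux_saDist_l1_le M π hπ ν' t)
          (pow_nonneg (aux_gamma_nonneg M) t)
    _ = ∑ x, |ν' x| := by
        rw [tsum_mul_right, tsum_geometric_of_lt_one (aux_gamma_nonneg M) M.γ_lt_one]
        field_simp

lemma aux_occFrom_flow (π : X → A → ℝ) (hπ : FinMDP.IsPolicy π) (ν' : X → ℝ)
    (p : X × A) :
    M.occFrom ν' π p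
      = ((1 - M.γ) * ν' p.1 + M.γ * ∑ q : X × A, M.occFrom ν' π q * M.P q.1 q.2 p.1)
          * π p.1 p.2 := by
  have hγ1 := aux_one_sub_gamma_pos M
  have key : (∑' t : ℕ, M.γ ^ t * M.saDist ν' π t p)
      = ν' p.1 * π p.1 p.2
        + M.γ * (∑ q : X × A, (∑' t : ℕ, M.γ ^ t * M.saDist ν' π t q) * M.P q.1 q.2 p.1)
            * π p.1 p.2 := by
    rw [Summable.tsum_eq_zero_add (aux_summable M π hπ ν' p)]
    congr 1
    · simp [FinMDP.saDist]
    have hterm : ∀ t : ℕ, M.γ ^ (t+1) * M.saDist ν' π (t+1) p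
        = M.γ * (∑ q : X × A, (M.γ ^ t * M.saDist ν' π t q) * M.P q.1 q.2 p.1)
            * π p.1 p.2 := by
      intro t
      simp only [FinMDP.saDist, pow_succ]
      rw [show ∑ q : X × A, M.γ ^ t * M.saDist ν' π t q * M.P q.1 q.2 p.1
          = M.γ ^ t * ∑ q : X × A, M.saDist ν' π t q * M.P q.1 q.2 p.1 by
        rw [Finset.mul_sum]; exact Finset.sum_congr rfl fun q _ => by ring]
      ring
    rw [tsum_congr hterm, tsum_mul_right, tsum_mul_left]
    congr 2
    rw [Summable.tsum_finsetSum (fun q _ => (aux_summable M π hπ ν' q).mul_right (M.P q.1 q.2 p.1))]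
    exact Finset.sum_congr rfl fun q _ => (tsum_mul_right)
  show (1 - M.γ) * (∑' t : ℕ, M.γ ^ t * M.saDist ν' π t p) = _
  rw [key]
  have hocc : ∑ q : X × A, M.occFrom ν' π q * M.P q.1 q.2 p.1
      = (1 - M.γ) * ∑ q : X × A, (∑' t : ℕ, M.γ ^ t * M.saDist ν' π t q) * M.P q.1 q.2 p.1 := by
    rw [Finset.mul_sum]
    exact Finset.sum_congr rfl fun q _ => by
      show M.occFrom ν' π q * _ = _
      unfold FinMDP.occFrom; ring
  rw [hocc]
  ring

lemma aux_flow_unique (π : X → A → ℝ) (hπ : FinMDP.IsPolicy π) (ν' : X → ℝ)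
    (f g : X × A → ℝ)
    (hf : ∀ p : X × A, f p
      = ((1 - M.γ) * ν' p.1 + M.γ * ∑ q : X × A, f q * M.P q.1 q.2 p.1) * π p.1 p.2)
    (hg : ∀ p : X × A, g p
      = ((1 - M.γ) * ν' p.1 + M.γ * ∑ q : X × A, g q * M.P q.1 q.2 p.1) * π p.1 p.2) :
    f = g := by
  have hD : ∀ p : X × A, f p - g p
      = M.γ * (∑ q : X × A, (f q - g q) * M.P q.1 q.2 p.1) * π p.1 p.2 := by
    intro p
    rw [hf p, hg p, ← sub_mul]
    congr 1
    rw [show ∑ q : X × A, (f q - g q) * M.P q.1 q.2 p.1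
        = (∑ q : X × A, f q * M.P q.1 q.2 p.1) - ∑ q : X × A, g q * M.P q.1 q.2 p.1 by
      rw [← Finset.sum_sub_distrib]; exact Finset.sum_congr rfl fun q _ => sub_mul _ _ _]
    ring
  set S : ℝ := ∑ p : X × A, |f p - g p| with hSdef
  have hS0 : 0 ≤ S := Finset.sum_nonneg fun p _ => abs_nonneg _
  have hSle : S ≤ M.γ * S := by
    have hp : ∀ p : X × A, |f p - g p|
        ≤ M.γ * (∑ q : X × A, |f q - g q| * M.P q.1 q.2 p.1) * π p.1 p.2 := by
      intro p
      rw [hD p, abs_mul, abs_of_nonneg (hπ.1 p.1 p.2), abs_mul,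
        abs_of_nonneg (aux_gamma_nonneg M)]
      refine mul_le_mul_of_nonneg_right (mul_le_mul_of_nonneg_left ?_
        (aux_gamma_nonneg M)) (hπ.1 p.1 p.2)
      calc |∑ q : X × A, (f q - g q) * M.P q.1 q.2 p.1|
          ≤ ∑ q : X × A, |(f q - g q) * M.P q.1 q.2 p.1| := Finset.abs_sum_le_sum_abs _ _
        _ = ∑ q : X × A, |f q - g q| * M.P q.1 q.2 p.1 := by
            refine Finset.sum_congr rfl fun q _ => ?_
            rw [abs_mul, abs_of_nonneg (M.P_nonneg _ _ _)]
    calc S ≤ ∑ p : X × A, M.γ * (∑ q : X × A, |f q - g q| * M.P q.1 q.2 p.1) * π p.1 p.2 :=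
          Finset.sum_le_sum fun p _ => hp p
      _ = M.γ * ∑ x : X, (∑ q : X × A, |f q - g q| * M.P q.1 q.2 x) * ∑ a : A, π x a := by
          rw [Fintype.sum_prod_type, Finset.mul_sum]
          exact Finset.sum_congr rfl fun x _ => by
            rw [Finset.mul_sum, Finset.mul_sum]
            exact Finset.sum_congr rfl fun a _ => by ring
      _ = M.γ * ∑ x : X, ∑ q : X × A, |f q - g q| * M.P q.1 q.2 x := by
          congr 1
          exact Finset.sum_congr rfl fun x _ => by rw [hπ.2 x, mul_one]
      _ = M.γ * ∑ q : X × A, |f q - g q| * ∑ x : X, M.P q.1 q.2 x := by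
          congr 1
          rw [Finset.sum_comm]
          exact Finset.sum_congr rfl fun q _ => (Finset.mul_sum _ _ _).symm
      _ = M.γ * S := by
          congr 1
          exact Finset.sum_congr rfl fun q _ => by rw [M.P_sum, mul_one]
  have hSzero : S = 0 := by nlinarith [M.γ_lt_one]
  funext p
  have : |f p - g p| = 0 := by
    have h1 : |f p - g p| ≤ S :=
      Finset.single_le_sum (f := fun q => |f q - g q|) (fun q _ => abs_nonneg _)
        (Finset.mem_univ p)
    have h2 : 0 ≤ |f p - g p| := abs_nonneg _
    linarith [hSzero]
  have := abs_eq_zero.mp this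
  linarith [this]

lemma aux_mu_flow (μ : X × A → ℝ) (hμ : ∀ p, 0 ≤ μ p) (p : X × A) :
    μ p = ((1 - M.γ) * M.Tflow μ p.1
        + M.γ * ∑ q : X × A, μ q * M.P q.1 q.2 p.1) * inducedPolicy μ p.1 p.2 := by
  have hγ1 := aux_one_sub_gamma_pos M
  have hT : (1 - M.γ) * M.Tflow μ p.1
      = (∑ a, μ (p.1, a)) - M.γ * ∑ q : X × A, μ q * M.P q.1 q.2 p.1 := by
    unfold FinMDP.Tflow
    field_simp
  rw [hT, sub_add_cancel]
  unfold inducedPolicy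
  by_cases h : (∑ a' : A, μ (p.1, a')) = 0
  · have hz : μ p = 0 := by
      have := (Finset.sum_eq_zero_iff_of_nonneg (fun a _ => hμ (p.1, a))).1 h p.2
        (Finset.mem_univ _)
      simpa using this
    simp [h, hz]
  · rw [if_neg h, mul_comm, div_mul_cancel₀ _ h]

end AuxProof

/-- For any distribution `μ ∈ Δ(X×A)` and cost `c` with `‖c‖_∞ ≤ 1`,
the gap between the linear objective at `μ` and the true expected cost of the
induced policy satisfies `⟨μ, c⟩ - ρ_c(π_μ) ≤ ‖T_γ μ - ν₀‖₁`. -/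
theorem objective_gap_bound (M : FinMDP X A)
    (μ : X × A → ℝ) (hμ : IsDist μ)
    (c : X × A → ℝ) (hc : ∀ p, |c p| ≤ 1) :
    (∑ p : X × A, μ p * c p) - M.cost c (inducedPolicy μ)
      ≤ l1 (fun x => M.Tflow μ x - M.ν x) := by
  obtain ⟨hμ0, hμ1⟩ := hμ
  set π := inducedPolicy μ with hπdef
  have hπ : FinMDP.IsPolicy π := aux_inducedPolicy_isPolicy μ hμ0
  set ν' : X → ℝ := fun x => M.Tflow μ x with hν'def
  have hμeq : μ = M.occFrom ν' π :=
    aux_flow_unique M π hπ ν' μ (M.occFrom ν' π)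
      (fun p => aux_mu_flow M μ hμ0 p)
      (fun p => aux_occFrom_flow M π hπ ν' p)
  have hcost : M.cost c π = ∑ p : X × A, M.occFrom M.ν π p * c p := rfl
  calc (∑ p : X × A, μ p * c p) - M.cost c π
      = ∑ p : X × A, M.occFrom (fun x => ν' x - M.ν x) π p * c p := by
        rw [hcost, ← Finset.sum_sub_distrib]
        refine Finset.sum_congr rfl fun p _ => ?_
        rw [aux_occFrom_sub M π hπ]
        conv_lhs => rw [hμeq]
        ring
    _ ≤ ∑ p : X × A, |M.occFrom (fun x => ν' x - M.ν x) π p| := by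
        refine Finset.sum_le_sum fun p _ => ?_
        calc M.occFrom (fun x => ν' x - M.ν x) π p * c p
            ≤ |M.occFrom (fun x => ν' x - M.ν x) π p * c p| := le_abs_self _
          _ = |M.occFrom (fun x => ν' x - M.ν x) π p| * |c p| := abs_mul _ _
          _ ≤ |M.occFrom (fun x => ν' x - M.ν x) π p| * 1 := by
              gcongr
              exact hc p
          _ = _ := mul_one _
    _ ≤ ∑ x, |ν' x - M.ν x| := aux_occFrom_l1_le M π hπ _
    _ = l1 (fun x => M.Tflow μ x - M.ν x) := rfl
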